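/- (Proposition 6.1) Let ξ = exp(iπ/5) ∈ ℂ, and define the maps r₁, r₂, T : ℂ → ℂ by r₁(z) = -conj(z), r₂(z) = -ξ⁸ · conj(z), and T(z) = z + ξ². For every n ∈ ℕ, the set of complex numbers of the form (f_k ∘ ⋯ ∘ f_1)(0), where k ∈ ℕ, each f_i ∈ {r₁, r₂, T}, and T occurs at most n times among f_1, …, f_k, is exactly Q₂(n) = {Σ_{j=0}^{9} m_j ξ^j : m₀, …, m₉ ∈ ℕ, Σ_{j=0}^{9} m_j ≤ n}. That is, Q₂(n) consists of all sums of at most n (not necessarily distinct) 10th roots of unity. -/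
import Mathlib


open Complex

/-- ξ = exp(iπ/5), a primitive 10th root of unity. -/
noncomputable def xi : ℂ := Complex.exp (Real.pi * Complex.I / 5)

/-- The H₂^aff-induced quasicrystal fragment with cut-off parameter n:
all sums of at most n (not necessarily distinct) 10th roots of unity. -/
noncomputable def Q2 (n : ℕ) : Set ℂ :=
  {z : ℂ | ∃ m : Fin 10 → ℕ, (∑ j, m j) ≤ n ∧ z = ∑ j, (m j : ℂ) * xi ^ (j : ℕ)}

/-- The three generators of H₂^aff acting on ℂ: the reflections r₁, r₂ and the
translation T by the highest root ξ². -/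
noncomputable def gen : Fin 3 → ℂ → ℂ
  | 0 => fun z => -(starRingEnd ℂ z)
  | 1 => fun z => -xi ^ 8 * starRingEnd ℂ z
  | 2 => fun z => z + xi ^ 2

lemma xi_pow_five : xi ^ 5 = -1 := by
  rw [xi, ← Complex.exp_nat_mul,
    show (5:ℕ) * ((Real.pi:ℂ) * Complex.I / 5) = Real.pi * Complex.I by push_cast; ring,
    Complex.exp_pi_mul_I]

lemma xi_pow_ten : xi ^ 10 = 1 := by
  rw [show (10:ℕ) = 5*2 from rfl, pow_mul, xi_pow_five]; norm_num

lemma xi_pow_mod (a : ℕ) : xi ^ a = xi ^ (a % 10) := by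
  conv_lhs => rw [← Nat.div_add_mod a 10]
  rw [pow_add, pow_mul, xi_pow_ten, one_pow, one_mul]

lemma neg_xi_pow (a : ℕ) : -(xi ^ a) = xi ^ (a + 5) := by
  rw [pow_add, xi_pow_five]; ring

lemma conj_xi : (starRingEnd ℂ) xi = xi ^ 9 := by
  have h1 : (starRingEnd ℂ) xi * xi = 1 := by
    rw [xi, ← Complex.exp_conj, ← Complex.exp_add]
    have : (starRingEnd ℂ) ((Real.pi:ℂ) * Complex.I / 5) = -((Real.pi:ℂ) * Complex.I / 5) := by
      have : ((5:ℂ)) = ((5:ℝ):ℂ) := by norm_num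
      rw [map_div₀, map_mul, Complex.conj_I, Complex.conj_ofReal, this, Complex.conj_ofReal]
      push_cast; ring
    rw [this, neg_add_cancel, Complex.exp_zero]
  have h2 : xi ^ 9 * xi = 1 := by rw [← pow_succ, xi_pow_ten]
  have hx : xi ≠ 0 := by rw [xi]; exact Complex.exp_ne_zero _
  have := mul_right_cancel₀ hx (h1.trans h2.symm)
  exact this



/-- permutation j ↦ 5 - j on Fin 10 -/
def sigma0 : Equiv.Perm (Fin 10) := ⟨fun j => 5 - j, fun j => 5 - j, by decide, by decide⟩
/-- permutation j ↦ 3 - j on Fin 10 -/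
def sigma1 : Equiv.Perm (Fin 10) := ⟨fun j => 3 - j, fun j => 3 - j, by decide, by decide⟩

lemma neg_conj_pow (j : Fin 10) :
    -((starRingEnd ℂ) (xi ^ (j:ℕ))) = xi ^ ((sigma0 j : Fin 10) : ℕ) := by
  have h : ((sigma0 j : Fin 10) : ℕ) = (9 * (j:ℕ) + 5) % 10 := by revert j; decide
  rw [map_pow, conj_xi, ← pow_mul, mul_comm, neg_xi_pow, h, show (j:ℕ)*9 + 5 = 9*(j:ℕ)+5 by ring, xi_pow_mod (9 * (j:ℕ) + 5)]

lemma gen1_pow (j : Fin 10) :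
    -xi ^ 8 * (starRingEnd ℂ) (xi ^ (j:ℕ)) = xi ^ ((sigma1 j : Fin 10) : ℕ) := by
  have h : ((sigma1 j : Fin 10) : ℕ) = (9 * (j:ℕ) + 13) % 10 := by revert j; decide
  rw [map_pow, conj_xi, ← pow_mul, mul_comm 9 (j:ℕ)]
  rw [show -xi ^ 8 * xi ^ ((j:ℕ)*9) = -(xi ^ ((j:ℕ)*9 + 8)) by rw [pow_add]; ring]
  rw [neg_xi_pow, h, show (j:ℕ)*9 + 8 + 5 = 9*(j:ℕ) + 13 by ring, xi_pow_mod (9 * (j:ℕ) + 13)]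

lemma Q2_gen0 {n : ℕ} {z : ℂ} (h : z ∈ Q2 n) : gen 0 z ∈ Q2 n := by
  obtain ⟨m, hm, rfl⟩ := h
  refine ⟨fun j => m (sigma0 j), ?_, ?_⟩
  · rw [Equiv.sum_comp sigma0 m]; exact hm
  · show -((starRingEnd ℂ) _) = _
    rw [map_sum]
    rw [← Finset.sum_neg_distrib]
    rw [← Equiv.sum_comp sigma0 (fun j => ((m (sigma0 j) : ℂ) * xi ^ (j:ℕ)))]
    refine Finset.sum_congr rfl fun j _ => ?_
    have inv : sigma0 (sigma0 j) = j := by revert j; decide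
    rw [map_mul, Complex.conj_natCast, inv, ← neg_conj_pow]
    ring

lemma Q2_gen1 {n : ℕ} {z : ℂ} (h : z ∈ Q2 n) : gen 1 z ∈ Q2 n := by
  obtain ⟨m, hm, rfl⟩ := h
  refine ⟨fun j => m (sigma1 j), ?_, ?_⟩
  · rw [Equiv.sum_comp sigma1 m]; exact hm
  · show -xi ^ 8 * (starRingEnd ℂ) _ = _
    rw [map_sum, Finset.mul_sum]
    rw [← Equiv.sum_comp sigma1 (fun j => ((m (sigma1 j) : ℂ) * xi ^ (j:ℕ)))]
    refine Finset.sum_congr rfl fun j _ => ?_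
    have inv : sigma1 (sigma1 j) = j := by revert j; decide
    rw [map_mul, Complex.conj_natCast, inv, ← gen1_pow]
    ring

lemma Q2_gen2 {n : ℕ} {z : ℂ} (h : z ∈ Q2 n) : gen 2 z ∈ Q2 (n+1) := by
  obtain ⟨m, hm, rfl⟩ := h
  refine ⟨fun j => m j + if j = 2 then 1 else 0, ?_, ?_⟩
  · rw [Finset.sum_add_distrib, Finset.sum_ite_eq' Finset.univ (2 : Fin 10) (fun _ => 1)]
    simp only [Finset.mem_univ, if_true]
    omega
  · show (∑ j, (m j : ℂ) * xi ^ (j:ℕ)) + xi ^ 2 = _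
    push_cast
    rw [Finset.sum_congr rfl (fun j _ => add_mul ((m j : ℂ)) _ _), Finset.sum_add_distrib]
    congr 1
    simp only [ite_mul, one_mul, zero_mul, Finset.sum_ite_eq', Finset.mem_univ, if_true]
    norm_num

lemma Q2_mono {a b : ℕ} (h : a ≤ b) : Q2 a ⊆ Q2 b := by
  rintro z ⟨m, hm, rfl⟩; exact ⟨m, hm.trans h, rfl⟩

lemma zero_mem_Q2 (n : ℕ) : (0:ℂ) ∈ Q2 n :=
  ⟨fun _ => 0, by simp, by simp⟩

lemma orbit_mem (fs : List (Fin 3)) :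
    fs.foldl (fun w i => gen i w) 0 ∈ Q2 (fs.count 2) := by
  induction fs using List.reverseRecOn with
  | nil => exact zero_mem_Q2 0
  | append_singleton fs i ih =>
    rw [List.foldl_append, List.foldl_cons, List.foldl_nil, List.count_append]
    fin_cases i
    · simpa using Q2_gen0 ih
    · simpa using Q2_gen1 ih
    · simpa using Q2_gen2 ih

noncomputable abbrev act (fs : List (Fin 3)) (z : ℂ) : ℂ := fs.foldl (fun w i => gen i w) z

lemma conj_step (w : List (Fin 3)) (c : ℂ)
    (hc : ∀ z, act w z = z + c) :
    ∀ z, act ((0 :: 1 :: w) ++ [1, 0]) z = z + xi ^ 2 * c := by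
  intro z
  have key : ∀ y : ℂ, gen 0 (gen 1 y) = xi ^ 2 * y := by
    intro y
    show -((starRingEnd ℂ) (-xi ^ 8 * (starRingEnd ℂ) y)) = xi ^ 2 * y
    rw [map_mul, map_neg, map_pow, conj_xi, Complex.conj_conj, ← pow_mul]
    rw [show xi ^ (9*8) = xi ^ 2 from by rw [xi_pow_mod]]
    ring
  have key2 : gen 1 (gen 0 z) = xi ^ 8 * z := by
    show -xi ^ 8 * (starRingEnd ℂ) (-((starRingEnd ℂ) z)) = xi ^ 8 * z
    rw [map_neg, Complex.conj_conj]; ring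
  simp only [act] at hc
  simp only [act, List.cons_append, List.foldl_cons, List.foldl_append, List.foldl_nil]
  rw [hc, key2, key, show xi^2 * (xi^8 * z + c) = xi^(2+8) * z + xi^2*c from by
      rw [pow_add]; ring,
    show xi ^ (2+8) = 1 from by rw [xi_pow_mod]; norm_num]
  ring

lemma count_conj_step (w : List (Fin 3)) :
    ((0 :: 1 :: w) ++ [1, 0]).count 2 = w.count 2 := by
  simp [List.count_append, List.count_cons]

lemma even_words (k : ℕ) : ∃ w : List (Fin 3),
    w.count 2 = 1 ∧ ∀ z, act w z = z + xi ^ (2 * k + 2) := by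
  induction k with
  | zero =>
    refine ⟨[2], by decide, fun z => ?_⟩
    show gen 2 z = z + xi ^ 2
    rfl
  | succ k ih =>
    obtain ⟨w, hw1, hw2⟩ := ih
    refine ⟨(0 :: 1 :: w) ++ [1, 0], by rw [count_conj_step, hw1], fun z => ?_⟩
    rw [conj_step w _ hw2 z, ← pow_add]
    congr 2
    ring

lemma odd_base : ∀ z, act [0, 2, 0] z = z + xi ^ 3 := by
  intro z
  simp only [act, List.foldl_cons, List.foldl_nil]
  show gen 0 (gen 2 (gen 0 z)) = z + xi ^ 3
  show -((starRingEnd ℂ) (-((starRingEnd ℂ) z) + xi ^ 2)) = z + xi ^ 3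
  rw [map_add, map_neg, Complex.conj_conj, map_pow, conj_xi, ← pow_mul,
    show xi ^ (9*2) = xi ^ 8 from by rw [xi_pow_mod],
    show (xi:ℂ) ^ 3 = -(xi ^ 8) from by rw [neg_xi_pow, xi_pow_mod 13]]
  ring

lemma odd_words (k : ℕ) : ∃ w : List (Fin 3),
    w.count 2 = 1 ∧ ∀ z, act w z = z + xi ^ (2 * k + 3) := by
  induction k with
  | zero => exact ⟨[0,2,0], by decide, odd_base⟩
  | succ k ih =>
    obtain ⟨w, hw1, hw2⟩ := ih
    refine ⟨(0 :: 1 :: w) ++ [1, 0], by rw [count_conj_step, hw1], fun z => ?_⟩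
    rw [conj_step w _ hw2 z, ← pow_add]
    congr 2
    ring

lemma exists_word (j : Fin 10) : ∃ w : List (Fin 3),
    w.count 2 = 1 ∧ ∀ z, act w z = z + xi ^ (j : ℕ) := by
  have E : ∀ k : ℕ, ∃ w : List (Fin 3),
      w.count 2 = 1 ∧ ∀ z, act w z = z + xi ^ ((2 * k + 2) % 10) := by
    intro k
    obtain ⟨w, h1, h2⟩ := even_words k
    exact ⟨w, h1, fun z => by rw [h2, xi_pow_mod]⟩
  have O : ∀ k : ℕ, ∃ w : List (Fin 3),
      w.count 2 = 1 ∧ ∀ z, act w z = z + xi ^ ((2 * k + 3) % 10) := by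
    intro k
    obtain ⟨w, h1, h2⟩ := odd_words k
    exact ⟨w, h1, fun z => by rw [h2, xi_pow_mod]⟩
  fin_cases j
  · simpa using E 4
  · simpa using O 4
  · simpa using E 0
  · simpa using O 0
  · simpa using E 1
  · simpa using O 1
  · simpa using E 2
  · simpa using O 2
  · simpa using E 3
  · simpa using O 3

lemma mem_orbit_of_sum : ∀ (N : ℕ) (m : Fin 10 → ℕ), (∑ j, m j) = N →
    ∃ fs : List (Fin 3), fs.count 2 = N ∧
      act fs 0 = ∑ j, (m j : ℂ) * xi ^ (j : ℕ) := by
  intro N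
  induction N with
  | zero =>
    intro m hm
    refine ⟨[], by simp, ?_⟩
    have : ∀ j, m j = 0 := by
      intro j
      have := Finset.sum_eq_zero_iff.mp hm j (Finset.mem_univ j)
      exact this
    simp [act, this]
  | succ N ih =>
    intro m hm
    have hex : ∃ j, m j ≠ 0 := by
      by_contra h
      push_neg at h
      simp [h] at hm
    obtain ⟨j, hj⟩ := hex
    set m' : Fin 10 → ℕ := Function.update m j (m j - 1) with hm'
    have hsum' : (∑ i, m' i) = N := by
      rw [hm', Finset.sum_update_of_mem (Finset.mem_univ j)]
      rw [← Finset.add_sum_erase Finset.univ m (Finset.mem_univ j), Finset.erase_eq] at hm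
      omega
    obtain ⟨fs, hc, hf⟩ := ih m' hsum'
    obtain ⟨w, hw1, hw2⟩ := exists_word j
    refine ⟨fs ++ w, ?_, ?_⟩
    · rw [List.count_append, hc, hw1]
    · rw [show act (fs ++ w) 0 = act w (act fs 0) from List.foldl_append .., hw2, hf]
      have split : ∀ g : Fin 10 → ℂ, (∑ i, g i) = g j + ∑ i ∈ Finset.univ.erase j, g i :=
        fun g => (Finset.add_sum_erase Finset.univ g (Finset.mem_univ j)).symm
      rw [split (fun i => (m' i : ℂ) * xi ^ (i:ℕ)), split (fun i => (m i : ℂ) * xi ^ (i:ℕ))]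
      have h1 : ∀ i ∈ Finset.univ.erase j, ((m' i : ℂ) * xi ^ (i:ℕ)) = (m i : ℂ) * xi ^ (i:ℕ) := by
        intro i hi
        rw [hm', Function.update_of_ne (Finset.ne_of_mem_erase hi)]
      rw [Finset.sum_congr rfl h1]
      have h2 : (m' j : ℂ) = (m j : ℂ) - 1 := by
        rw [hm', Function.update_self]
        have : (1:ℕ) ≤ m j := Nat.one_le_iff_ne_zero.mpr hj
        push_cast [Nat.cast_sub this]
        ring
      rw [h2]
      ring


/-- Proposition 6.1: the points obtained from the origin by applying r₁, r₂ and at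
most n translations T (in any order) are exactly the sums of at most n roots of Δ₂. -/
theorem Q2_eq_orbit (n : ℕ) :
    {z : ℂ | ∃ fs : List (Fin 3), fs.count 2 ≤ n ∧
      z = fs.foldl (fun w i => gen i w) 0} = Q2 n := by
  ext z
  constructor
  · rintro ⟨fs, hc, rfl⟩
    exact Q2_mono hc (orbit_mem fs)
  · rintro ⟨m, hm, rfl⟩
    obtain ⟨fs, hc, hf⟩ := mem_orbit_of_sum (∑ j, m j) m rfl
    exact ⟨fs, hc ▸ hm, hf.symm⟩
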